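/- Let n ≥ 1 and N = n(n+1)/2. The Lusztig parametrization map from (ℝ_{>0})^N to the upper unitriangular (n+1)×(n+1) real matrices, sending a tuple of positive parameters to the product of the matrices x_{i_1}(a_1)·x_{i_2}(a_2)⋯x_{i_N}(a_N) along the standard reduced word w₀ = (s_n s_{n−1}⋯s_1)(s_n s_{n−1}⋯s_2)⋯(s_n s_{n−1} s_{n-2})(s_n s_{n−1})(s_n) of the longest Weyl group element of type A_n, is injective: if two tuples of positive reals give the same matrix product, then the tuples are equal. -/

import Mathlib

open Matrix

open Fin.NatCast in
/-- `x_i(a) = 1 + a·E_{i,i+1}` in the (n+1)×(n+1) real matrices, with 0-based letter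
index `i : ℕ` (so the letter `s_{i+1}` of the paper corresponds to `i`); natural
numbers are cast to `Fin (n+1)`. -/
noncomputable def xA (n : ℕ) (i : ℕ) (a : ℝ) : Matrix (Fin (n + 1)) (Fin (n + 1)) ℝ :=
  1 + Matrix.single (i : Fin (n + 1)) ((i + 1 : ℕ) : Fin (n + 1)) a

/-- The standard reduced word `w₀ = (s_n⋯s_1)(s_n⋯s_2)⋯(s_n s_{n-1})(s_n)` of the
longest element of the Weyl group of type `Aₙ`, written with 0-based letters
(`s_{i+1} ↦ i`), read left to right. -/
def stdWord (n : ℕ) : List ℕ :=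
  (List.range n).flatMap fun j => (List.range (n - j)).map fun t => n - 1 - t

/-- The product `x_{i₁}(a₁)·x_{i₂}(a₂)⋯x_{i_N}(a_N)` along a word zipped with its
parameters. -/
noncomputable def luszProd (n : ℕ) (l : List (ℕ × ℝ)) :
    Matrix (Fin (n + 1)) (Fin (n + 1)) ℝ :=
  (l.map fun p => xA n p.1 p.2).prod

namespace Lusz

open Fin.NatCast

lemma luszProd_cons (n : ℕ) (p : ℕ × ℝ) (l : List (ℕ × ℝ)) :
    luszProd n (p :: l) = xA n p.1 p.2 * luszProd n l := by simp [luszProd]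

lemma luszProd_append (n : ℕ) (l₁ l₂ : List (ℕ × ℝ)) :
    luszProd n (l₁ ++ l₂) = luszProd n l₁ * luszProd n l₂ := by simp [luszProd]

/-- The block word with letters `s, s-1, ..., s-m+1`. -/
def bw (s m : ℕ) : List ℕ := (List.range m).map fun t => s - t

lemma bw_succ (s m : ℕ) : bw s (m + 1) = s :: bw (s - 1) m := by
  simp [bw, List.range_succ_eq_map, List.map_map, Function.comp_def, Nat.sub_sub, Nat.add_comm]

lemma val_cast {n : ℕ} {v : ℕ} (h : v ≤ n) : ((v : ℕ) : Fin (n+1)).val = v := by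
  simp [Fin.val_natCast, Nat.mod_eq_of_lt (by omega : v < n + 1)]

lemma cast_ne {n : ℕ} {v w : ℕ} (hv : v ≤ n) (hw : w ≤ n) (h : v ≠ w) :
    ((v : ℕ) : Fin (n+1)) ≠ ((w : ℕ) : Fin (n+1)) := by
  intro he
  apply h
  have := congrArg Fin.val he
  rwa [val_cast hv, val_cast hw] at this

/-- A decreasing block multiplies out to `1 +` a sum of superdiagonal matrix units. -/
lemma block_prod (n : ℕ) : ∀ (m s : ℕ) (c : List ℝ), s < n → m ≤ s + 1 → c.length = m →
    luszProd n ((bw s m).zip c) =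
      1 + ∑ t ∈ Finset.range m,
        single ((s - t : ℕ) : Fin (n+1)) ((s - t + 1 : ℕ) : Fin (n+1)) (c.getD t 0) := by
  intro m
  induction m with
  | zero => intro s c _ _ hc; simp [bw, luszProd]
  | succ m ih =>
    intro s c hs hm hc
    match c with
    | c0 :: c' =>
      rw [bw_succ, List.zip_cons_cons, luszProd_cons]
      rcases Nat.eq_zero_or_pos s with rfl | hs1
      · have hm0 : m = 0 := by omega
        subst hm0
        simp [luszProd, xA, bw]
      · have hc' : c'.length = m := by simpa using hc
        rw [ih (s-1) c' (by omega) (by omega) hc']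
        rw [Finset.sum_range_succ']
        have hcross : ∀ t ∈ Finset.range m,
            single ((s:ℕ) : Fin (n+1)) ((s+1:ℕ) : Fin (n+1)) c0 *
              single ((s-1-t : ℕ) : Fin (n+1)) ((s-1-t+1 : ℕ) : Fin (n+1))
                (c'.getD t 0) = 0 := by
          intro t _
          apply single_mul_single_of_ne
          exact cast_ne (by omega) (by omega) (by omega)
        have hsum : (∑ t ∈ Finset.range m,
              single ((s - (t+1) : ℕ) : Fin (n+1)) ((s - (t+1) + 1 : ℕ) : Fin (n+1))
                ((c0 :: c').getD (t+1) 0)) =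
            ∑ t ∈ Finset.range m,
              single ((s-1-t : ℕ) : Fin (n+1)) ((s-1-t+1 : ℕ) : Fin (n+1))
                (c'.getD t 0) :=
          Finset.sum_congr rfl fun t _ => by
            rw [show s - (t+1) = s - 1 - t by omega, List.getD_cons_succ]
        show (1 + single ((s:ℕ) : Fin (n+1)) ((s+1:ℕ) : Fin (n+1)) c0) *
            (1 + ∑ t ∈ Finset.range m,
              single ((s-1-t : ℕ) : Fin (n+1)) ((s-1-t+1 : ℕ) : Fin (n+1))
                (c'.getD t 0)) = _
        rw [add_mul, one_mul, mul_add, mul_one, Finset.mul_sum, Finset.sum_eq_zero hcross,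
          hsum]
        show _ = 1 + (_ + single ((s - 0 : ℕ) : Fin (n+1)) ((s - 0 + 1 : ℕ) : Fin (n+1))
          ((c0 :: c').getD 0 0))
        rw [Nat.sub_zero, List.getD_cons_zero]
        abel

/-- A product of `xA`'s with letters `≥ lo` agrees with the identity matrix on rows `< lo`
and on or below the diagonal. -/
lemma rows_one (n : ℕ) (lo : ℕ) :
    ∀ (l : List (ℕ × ℝ)), (∀ p ∈ l, lo ≤ p.1 ∧ p.1 + 1 ≤ n) →
    ∀ (p q : Fin (n+1)), (p.val < lo ∨ q.val ≤ p.val) →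
    luszProd n l p q = (1 : Matrix (Fin (n+1)) (Fin (n+1)) ℝ) p q := by
  intro l
  induction l with
  | nil => intro _ p q _; rfl
  | cons x l ih =>
    intro hl p q h
    obtain ⟨hx1, hx2⟩ := hl x List.mem_cons_self
    have hl' := fun p hp => hl p (List.mem_cons_of_mem _ hp)
    rw [luszProd_cons, xA, add_mul, one_mul, Matrix.add_apply]
    by_cases hp : p = ((x.1 : ℕ) : Fin (n+1))
    · have hpv : p.val = x.1 := by rw [hp]; exact val_cast (by omega)
      have hq : q.val ≤ p.val := by
        rcases h with h | h
        · omega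
        · exact h
      rw [hp, single_mul_apply_same, ← hp]
      have hv1 : ((x.1 + 1 : ℕ) : Fin (n+1)).val = x.1 + 1 := val_cast (by omega)
      have h1 : luszProd n l p q = (1 : Matrix (Fin (n+1)) (Fin (n+1)) ℝ) p q :=
        ih hl' p q (Or.inr hq)
      have h2 : luszProd n l ((x.1 + 1 : ℕ) : Fin (n+1)) q
          = (1 : Matrix (Fin (n+1)) (Fin (n+1)) ℝ) ((x.1 + 1 : ℕ) : Fin (n+1)) q :=
        ih hl' _ q (Or.inr (by omega))
      have h3 : (1 : Matrix (Fin (n+1)) (Fin (n+1)) ℝ) ((x.1 + 1 : ℕ) : Fin (n+1)) q = 0 :=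
        Matrix.one_apply_ne (by intro he; have := congrArg Fin.val he; omega)
      rw [h1, h2, h3]
      ring
    · rw [single_mul_apply_of_ne _ _ _ _ _ hp, add_zero]
      exact ih hl' p q h

/-- Entry formula for a bidiagonal unitriangular matrix times an arbitrary matrix. -/
lemma mul_entry (n k : ℕ) (hk : k < n) (f : ℕ → ℝ) (C : Matrix (Fin (n+1)) (Fin (n+1)) ℝ)
    (p q : Fin (n+1)) (hp1 : n - 1 - k ≤ p.val) (hp2 : p.val ≤ n - 1) :
    ((1 + ∑ t ∈ Finset.range (k+1),
        single ((n-1-t : ℕ) : Fin (n+1)) ((n-1-t+1 : ℕ) : Fin (n+1)) (f t)) * C) p q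
    = C p q + f (n-1-p.val) * C ((p.val + 1 : ℕ) : Fin (n+1)) q := by
  rw [add_mul, one_mul, Matrix.add_apply, Finset.sum_mul, Matrix.sum_apply]
  congr 1
  have ht0 : (n-1-p.val) ∈ Finset.range (k+1) := by
    simp only [Finset.mem_range]; omega
  rw [Finset.sum_eq_single_of_mem _ ht0]
  · have hcast : ((n - 1 - (n-1-p.val) : ℕ) : Fin (n+1)) = p := by
      rw [show n - 1 - (n-1-p.val) = p.val by omega, Fin.cast_val_eq_self]
    have hcast2 : ((n - 1 - (n-1-p.val) + 1 : ℕ) : Fin (n+1)) = ((p.val + 1 : ℕ) : Fin (n+1)) :=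
      congrArg _ (by omega)
    rw [hcast2, hcast, single_mul_apply_same]
  · intro t ht htne
    apply single_mul_apply_of_ne
    intro he
    have := congrArg Fin.val he
    rw [val_cast (by omega)] at this
    simp only [Finset.mem_range] at ht
    omega

/-- Key uniqueness lemma: in a factorization `B·C` with `B` bidiagonal unitriangular with
nonvanishing superdiagonal on rows `≥ n-1-k` and `C` unitriangular agreeing with `1` on
rows `< n-k` and on or below the diagonal, both factors are uniquely determined. -/
lemma key (n k : ℕ) (hk : k < n) (f g : ℕ → ℝ) (hf : ∀ t, t ≤ k → 0 < f t)
    (hg : ∀ t, t ≤ k → 0 < g t)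
    (C C' : Matrix (Fin (n+1)) (Fin (n+1)) ℝ)
    (hC : ∀ p q : Fin (n+1), (p.val < n - k ∨ q.val ≤ p.val) →
      C p q = (1 : Matrix (Fin (n+1)) (Fin (n+1)) ℝ) p q)
    (hC' : ∀ p q : Fin (n+1), (p.val < n - k ∨ q.val ≤ p.val) →
      C' p q = (1 : Matrix (Fin (n+1)) (Fin (n+1)) ℝ) p q)
    (hM : (1 + ∑ t ∈ Finset.range (k+1),
        single ((n-1-t : ℕ) : Fin (n+1)) ((n-1-t+1 : ℕ) : Fin (n+1)) (f t)) * C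
      = (1 + ∑ t ∈ Finset.range (k+1),
        single ((n-1-t : ℕ) : Fin (n+1)) ((n-1-t+1 : ℕ) : Fin (n+1)) (g t)) * C') :
    (∀ t, t ≤ k → f t = g t) ∧ C = C' := by
  have hMe : ∀ (u : ℕ) (q : Fin (n+1)), n-1-k ≤ u → u ≤ n-1 →
      C ((u:ℕ) : Fin (n+1)) q + f (n-1-u) * C ((u+1 : ℕ) : Fin (n+1)) q
      = C' ((u:ℕ) : Fin (n+1)) q + g (n-1-u) * C' ((u+1 : ℕ) : Fin (n+1)) q := by
    intro u q h1 h2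
    have hv : ((u:ℕ) : Fin (n+1)).val = u := val_cast (by omega)
    have e1 := mul_entry n k hk f C ((u:ℕ) : Fin (n+1)) q (by rw [hv]; exact h1)
      (by rw [hv]; exact h2)
    have e2 := mul_entry n k hk g C' ((u:ℕ) : Fin (n+1)) q (by rw [hv]; exact h1)
      (by rw [hv]; exact h2)
    rw [hv] at e1 e2
    rw [← e1, ← e2, hM]
  have diag1 : ∀ (P : Matrix (Fin (n+1)) (Fin (n+1)) ℝ),
      (∀ p q : Fin (n+1), (p.val < n - k ∨ q.val ≤ p.val) →
        P p q = (1 : Matrix (Fin (n+1)) (Fin (n+1)) ℝ) p q) →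
      ∀ v : ℕ, P ((v:ℕ) : Fin (n+1)) ((v:ℕ) : Fin (n+1)) = 1 := by
    intro P hP v
    rw [hP _ _ (Or.inr le_rfl), Matrix.one_apply_eq]
  have low0 : ∀ (P : Matrix (Fin (n+1)) (Fin (n+1)) ℝ),
      (∀ p q : Fin (n+1), (p.val < n - k ∨ q.val ≤ p.val) →
        P p q = (1 : Matrix (Fin (n+1)) (Fin (n+1)) ℝ) p q) →
      ∀ u v : ℕ, u ≤ n → v ≤ n → u < n - k → u ≠ v →
      P ((u:ℕ) : Fin (n+1)) ((v:ℕ) : Fin (n+1)) = 0 := by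
    intro P hP u v hu hv h1 h2
    rw [hP _ _ (Or.inl (by rw [val_cast hu]; exact h1)),
      Matrix.one_apply_ne (cast_ne hu hv h2)]
  have rows : ∀ d, d ≤ k+1 →
      (∀ q, C ((n-1-k+d : ℕ) : Fin (n+1)) q = C' ((n-1-k+d : ℕ) : Fin (n+1)) q)
      ∧ (d ≤ k → f (k-d) = g (k-d)) := by
    intro d
    induction d with
    | zero =>
      intro _
      have hrow : ∀ q, C ((n-1-k+0 : ℕ) : Fin (n+1)) q = C' ((n-1-k+0 : ℕ) : Fin (n+1)) q := by
        intro q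
        have hval : ((n-1-k+0 : ℕ) : Fin (n+1)).val = n-1-k := val_cast (by omega)
        rw [hC _ _ (Or.inl (by omega)), hC' _ _ (Or.inl (by omega))]
      refine ⟨hrow, fun _ => ?_⟩
      have he := hMe (n-1-k) (((n-1-k+1 : ℕ) : Fin (n+1))) le_rfl (by omega)
      rw [show n-1-(n-1-k) = k by omega] at he
      rw [low0 C hC _ _ (by omega) (by omega) (by omega) (by omega),
          low0 C' hC' _ _ (by omega) (by omega) (by omega) (by omega),
          diag1 C hC, diag1 C' hC'] at he
      simpa using he
    | succ d ih =>
      intro hd1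
      obtain ⟨ihrow, ihf⟩ := ih (by omega)
      have hfd : f (k-d) = g (k-d) := ihf (by omega)
      have hfne : f (k-d) ≠ 0 := ne_of_gt (hf _ (by omega))
      have hrow : ∀ q, C ((n-1-k+(d+1) : ℕ) : Fin (n+1)) q
          = C' ((n-1-k+(d+1) : ℕ) : Fin (n+1)) q := by
        intro q
        have he := hMe (n-1-k+d) q (by omega) (by omega)
        rw [show n-1-(n-1-k+d) = k-d by omega] at he
        rw [ihrow q, hfd] at he
        have := mul_left_cancel₀ (by rw [← hfd]; exact hfne) (by linarith [he] :
          g (k-d) * C ((n-1-k+d+1 : ℕ) : Fin (n+1)) q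
          = g (k-d) * C' ((n-1-k+d+1 : ℕ) : Fin (n+1)) q)
        rw [show n-1-k+(d+1) = n-1-k+d+1 by omega]
        exact this
      refine ⟨hrow, fun hd2 => ?_⟩
      have he := hMe (n-1-k+d+1) (((n-1-k+d+2 : ℕ) : Fin (n+1))) (by omega) (by omega)
      rw [show n-1-(n-1-k+d+1) = k-(d+1) by omega] at he
      have hr := hrow (((n-1-k+d+2 : ℕ) : Fin (n+1)))
      rw [show n-1-k+(d+1) = n-1-k+d+1 by omega] at hr
      rw [hr, show n-1-k+d+1+1 = n-1-k+d+2 by omega, diag1 C hC, diag1 C' hC'] at he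
      simpa using he
  constructor
  · intro t ht
    have := (rows (k-t) (by omega)).2 (by omega)
    rwa [show k-(k-t) = t by omega] at this
  · ext p q
    rcases Nat.lt_or_ge p.val (n-k) with h | h
    · rw [hC _ _ (Or.inl h), hC' _ _ (Or.inl h)]
    · have hd : p.val = n-1-k + (p.val - (n-1-k)) := by omega
      have := (rows (p.val - (n-1-k)) (by omega)).1 q
      rwa [← hd, Fin.cast_val_eq_self] at this

/-- The suffix of the standard word consisting of its last `k` blocks. -/
def tailW (n : ℕ) : ℕ → List ℕ
  | 0 => []
  | k+1 => ((List.range (k+1)).map fun t => n - 1 - t) ++ tailW n k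

lemma stdWord_eq_tailW (n : ℕ) : stdWord n = tailW n n := by
  suffices h : ∀ k, (List.range k).flatMap
      (fun j => (List.range (k - j)).map fun t => n - 1 - t) = tailW n k by
    exact h n
  intro k
  induction k with
  | zero => rfl
  | succ k ih =>
    rw [List.range_succ_eq_map, List.flatMap_cons, List.flatMap_map, tailW]
    simp only [Nat.succ_sub_succ]
    congr 1

lemma tailW_length (n : ℕ) : ∀ k, (tailW n k).length = k * (k+1) / 2 := by
  intro k
  induction k with
  | zero => rfl
  | succ k ih =>
    rw [tailW, List.length_append, List.length_map, List.length_range, ih]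
    have h : (k+1) * (k+1+1) = k * (k+1) + 2 * (k+1) := by ring
    omega

lemma mem_tailW (n : ℕ) : ∀ k, k ≤ n → ∀ i ∈ tailW n k, n - k ≤ i ∧ i + 1 ≤ n := by
  intro k
  induction k with
  | zero => intro _ i hi; simp [tailW] at hi
  | succ k ih =>
    intro hk i hi
    rw [tailW, List.mem_append] at hi
    rcases hi with hi | hi
    · simp only [List.mem_map, List.mem_range] at hi
      obtain ⟨t, ht, rfl⟩ := hi
      omega
    · have := ih (by omega) i hi
      omega

/-- The main induction: injectivity of the parametrization along the last `k` blocks. -/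
lemma ind (n : ℕ) (hn : 1 ≤ n) : ∀ k, k ≤ n → ∀ a b : List ℝ,
    a.length = (tailW n k).length → b.length = (tailW n k).length →
    (∀ t ∈ a, 0 < t) → (∀ t ∈ b, 0 < t) →
    luszProd n ((tailW n k).zip a) = luszProd n ((tailW n k).zip b) → a = b := by
  intro k
  induction k with
  | zero =>
    intro _ a b ha hb _ _ _
    simp only [tailW, List.length_nil] at ha hb
    rw [List.length_eq_zero_iff] at ha hb
    rw [ha, hb]
  | succ k ih =>
    intro hk a b ha hb hapos hbpos hM
    have hlen : (tailW n (k+1)).length = (k+1) + (tailW n k).length := by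
      simp [tailW]
    have ha₁ : (a.take (k+1)).length = k+1 := by rw [List.length_take]; omega
    have hb₁ : (b.take (k+1)).length = k+1 := by rw [List.length_take]; omega
    have ha₂ : (a.drop (k+1)).length = (tailW n k).length := by rw [List.length_drop]; omega
    have hb₂ : (b.drop (k+1)).length = (tailW n k).length := by rw [List.length_drop]; omega
    have hblk : ((List.range (k+1)).map fun t => n - 1 - t).length = k + 1 := by simp
    have hsplit : tailW n (k+1) = ((List.range (k+1)).map fun t => n - 1 - t) ++ tailW n k := rfl
    rw [hsplit, ← List.take_append_drop (k+1) a, ← List.take_append_drop (k+1) b] at hM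
    rw [List.zip_append (by rw [hblk, ha₁]), List.zip_append (by rw [hblk, hb₁]),
      luszProd_append, luszProd_append] at hM
    have hBa := block_prod n (k+1) (n-1) (a.take (k+1)) (by omega) (by omega) ha₁
    have hBb := block_prod n (k+1) (n-1) (b.take (k+1)) (by omega) (by omega) hb₁
    have hbw : bw (n-1) (k+1) = (List.range (k+1)).map fun t => n - 1 - t := rfl
    rw [hbw] at hBa hBb
    rw [hBa, hBb] at hM
    have hCrows : ∀ (c : List ℝ), c.length = (tailW n k).length →
        ∀ p q : Fin (n+1), (p.val < n - k ∨ q.val ≤ p.val) →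
        luszProd n ((tailW n k).zip c) p q = (1 : Matrix (Fin (n+1)) (Fin (n+1)) ℝ) p q := by
      intro c hc p q h
      refine rows_one n (n - k) _ ?_ p q h
      intro x hx
      have hx1 : x.1 ∈ tailW n k := (List.of_mem_zip hx).1
      exact mem_tailW n k (by omega) x.1 hx1
    have hposf : ∀ t, t ≤ k → 0 < (a.take (k+1)).getD t 0 := by
      intro t ht
      have htl : t < (a.take (k+1)).length := by omega
      rw [List.getD_eq_getElem _ _ htl]
      exact hapos _ (List.take_subset _ _ (List.getElem_mem htl))
    have hposg : ∀ t, t ≤ k → 0 < (b.take (k+1)).getD t 0 := by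
      intro t ht
      have htl : t < (b.take (k+1)).length := by omega
      rw [List.getD_eq_getElem _ _ htl]
      exact hbpos _ (List.take_subset _ _ (List.getElem_mem htl))
    obtain ⟨hfg, hCC⟩ := key n k (by omega) (fun t => (a.take (k+1)).getD t 0)
      (fun t => (b.take (k+1)).getD t 0) hposf hposg _ _
      (hCrows _ ha₂) (hCrows _ hb₂) hM
    have htake : a.take (k+1) = b.take (k+1) := by
      apply List.ext_getElem (by rw [ha₁, hb₁])
      intro i h1 h2
      have := hfg i (by omega)
      rwa [List.getD_eq_getElem _ _ h1, List.getD_eq_getElem _ _ h2] at this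
    have hdrop : a.drop (k+1) = b.drop (k+1) :=
      ih (by omega) _ _ ha₂ hb₂
        (fun t ht => hapos t (List.drop_subset _ _ ht))
        (fun t ht => hbpos t (List.drop_subset _ _ ht)) hCC
    rw [← List.take_append_drop (k+1) a, ← List.take_append_drop (k+1) b, htake, hdrop]

end Lusz

/-- Lemma 2.1 of the paper in type `Aₙ` for the standard reduced word: the Lusztig
parametrization `(ℝ_{>0})^N → U⁺`, `N = n(n+1)/2`, is injective. -/
theorem lusztig_parametrization_injective (n : ℕ) (hn : 1 ≤ n) :
    (stdWord n).length = n * (n + 1) / 2 ∧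
    ∀ a b : List ℝ, a.length = (stdWord n).length → b.length = (stdWord n).length →
      (∀ t ∈ a, 0 < t) → (∀ t ∈ b, 0 < t) →
      luszProd n ((stdWord n).zip a) = luszProd n ((stdWord n).zip b) → a = b := by
  have hw : stdWord n = Lusz.tailW n n := Lusz.stdWord_eq_tailW n
  constructor
  · rw [hw, Lusz.tailW_length]
  · intro a b ha hb hA hB hM
    rw [hw] at ha hb hM
    exact Lusz.ind n hn n le_rfl a b ha hb hA hB hM
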